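/- For the systematic binary Hamming code Ham(r,2) with r > 3, every achievable demand vector satisfies λ_1 + ⋯ + λ_k ≤ k = 2^r − 1 − r, and this bound is achieved by the vector (1,1,…,1). -/

import Mathlib

/-- `R` is a recovery set for data symbol `i` with respect to the generator matrix `G`. -/
def IsRecoverySet {k n : ℕ} {F : Type*} [Field F] (G : Matrix (Fin k) (Fin n) F)
    (i : Fin k) (R : Finset (Fin n)) : Prop :=
  (Pi.single i 1 : Fin k → F) ∈ Submodule.span F ((fun j => fun a => G a j) '' (R : Set (Fin n)))

/-- The demand vector `lam` is achievable for the storage system encoded by `G` with unit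
server capacities: there is a nonnegative allocation of each demand `lam i` over the recovery
sets of symbol `i` such that every node serves total load at most `1`. -/
def Achievable {k n : ℕ} {F : Type*} [Field F] (G : Matrix (Fin k) (Fin n) F)
    (lam : Fin k → ℝ) : Prop :=
  ∃ w : Fin k → Finset (Fin n) → ℝ,
    (∀ i R, 0 ≤ w i R) ∧
    (∀ i R, w i R ≠ 0 → IsRecoverySet G i R) ∧
    (∀ i, ∑ R : Finset (Fin n), w i R = lam i) ∧
    (∀ v : Fin n, (∑ i : Fin k, ∑ R : Finset (Fin n), if v ∈ R then w i R else 0) ≤ 1)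

lemma aux_pow : ∀ t : ℕ, 3 ≤ t → t + 2 < 2 ^ t := by
  intro t ht
  induction t with
  | zero => omega
  | succ p ih =>
    rcases Nat.lt_or_ge p 3 with h4 | h4
    · have hp : p = 2 := by omega
      subst hp; norm_num
    · have h := ih h4
      have h2 : 2 ^ (p + 1) = 2 * 2 ^ p := by rw [pow_succ]; ring
      omega

lemma zmod2_eq (x : ZMod 2) : x = 0 ∨ x = 1 := by revert x; decide

lemma count_dot_one {r : ℕ} (y : Fin r → ZMod 2) (hy : y ≠ 0) :
    (Finset.univ.filter (fun v : Fin r → ZMod 2 => ∑ a, y a * v a = 1)).card = 2 ^ (r - 1) := by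
  classical
  obtain ⟨a, ha⟩ : ∃ a, y a ≠ 0 := by
    by_contra h; push_neg at h; exact hy (funext h)
  have ha1 : y a = 1 := (zmod2_eq (y a)).resolve_left ha
  set v0 : Fin r → ZMod 2 := Pi.single a 1 with hv0
  have hl0 : ∑ b, y b * v0 b = 1 := by
    simp [hv0, Pi.single_apply, ha1]
  -- bijection between the two fibers
  have hr1 : 1 ≤ r := by
    by_contra h
    have hr0 : r = 0 := by omega
    subst hr0
    exact hy (funext (fun b => b.elim0))
  have hpow : 2 ^ r = 2 ^ (r - 1) + 2 ^ (r - 1) := by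
    have h : r - 1 + 1 = r := by omega
    conv_lhs => rw [← h, pow_succ]
    omega
  have hcard_eq :
      (Finset.univ.filter (fun v : Fin r → ZMod 2 => ∑ b, y b * v b = 1)).card =
      (Finset.univ.filter (fun v : Fin r → ZMod 2 => ¬ (∑ b, y b * v b = 1))).card := by
    apply Finset.card_bij' (fun v _ => v + v0) (fun v _ => v + v0)
    · intro v hv
      simp only [Finset.mem_filter, Finset.mem_univ, true_and] at hv ⊢
      have : ∑ b, y b * (v + v0) b = (∑ b, y b * v b) + ∑ b, y b * v0 b := by
        simp [mul_add, Finset.sum_add_distrib]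
      rw [this, hv, hl0]
      decide
    · intro v hv
      simp only [Finset.mem_filter, Finset.mem_univ, true_and] at hv ⊢
      have hsum : ∑ b, y b * (v + v0) b = (∑ b, y b * v b) + ∑ b, y b * v0 b := by
        simp [mul_add, Finset.sum_add_distrib]
      rw [hsum, hl0]
      rcases zmod2_eq (∑ b, y b * v b) with h | h
      · rw [h]; decide
      · exact absurd h hv
    · intro v _; funext b
      show v b + v0 b + v0 b = v b
      rw [add_assoc, CharTwo.add_self_eq_zero, add_zero]
    · intro v _; funext b
      show v b + v0 b + v0 b = v b
      rw [add_assoc, CharTwo.add_self_eq_zero, add_zero]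
  have htot : (Finset.filter (fun v : Fin r → ZMod 2 => ∑ b, y b * v b = 1) Finset.univ).card
      + (Finset.filter (fun v : Fin r → ZMod 2 => ¬ (∑ b, y b * v b = 1)) Finset.univ).card
      = (Finset.univ : Finset (Fin r → ZMod 2)).card :=
    Finset.card_filter_add_card_filter_not _
  have hcard_univ : (Finset.univ : Finset (Fin r → ZMod 2)).card = 2 ^ r := by
    simp [Finset.card_univ, Fintype.card_fun]
  rw [hcard_univ] at htot
  generalize hA : (Finset.filter (fun v : Fin r → ZMod 2 => ∑ b, y b * v b = 1) Finset.univ).card = cA at hcard_eq htot ⊢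
  generalize hB : (Finset.filter (fun v : Fin r → ZMod 2 => ¬ (∑ b, y b * v b = 1)) Finset.univ).card = cB at hcard_eq htot
  clear hA hB
  omega

lemma dot_factor {n r : ℕ} (H : Matrix (Fin r) (Fin n) (ZMod 2))
    (hsurj : Function.Surjective H.mulVecLin)
    (z : Fin n → ZMod 2)
    (hz : ∀ c : Fin n → ZMod 2, H.mulVec c = 0 → ∑ jj, z jj * c jj = 0) :
    ∃ y : Fin r → ZMod 2, ∀ jj, z jj = ∑ a, y a * H a jj := by
  classical
  let φ : (Fin n → ZMod 2) →ₗ[ZMod 2] ZMod 2 :=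
    { toFun := fun c => ∑ jj, z jj * c jj
      map_add' := by intro c d; simp [mul_add, Finset.sum_add_distrib]
      map_smul' := by intro m c; simp [Finset.mul_sum, mul_left_comm] }
  obtain ⟨σ, hσ⟩ := H.mulVecLin.exists_rightInverse_of_surjective
    (LinearMap.range_eq_top.2 hsurj)
  let ψ := φ.comp σ
  have hfac : ∀ c, φ c = ψ (H.mulVec c) := by
    intro c
    have h1 : H.mulVec (c - σ (H.mulVec c)) = 0 := by
      have h2 : H.mulVecLin (σ (H.mulVec c)) = H.mulVec c := by
        have := congrFun (congrArg DFunLike.coe hσ) (H.mulVec c)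
        simpa using this
      rw [Matrix.mulVec_sub]
      rw [show H.mulVec (σ (H.mulVec c)) = H.mulVecLin (σ (H.mulVec c)) from rfl, h2]
      simp
    have h3 : φ (c - σ (H.mulVec c)) = 0 := hz _ h1
    have h4 : φ c - φ (σ (H.mulVec c)) = 0 := by rw [← map_sub]; exact h3
    have : φ c = φ (σ (H.mulVec c)) := by linear_combination (norm := abel) h4
    exact this
  refine ⟨fun a => ψ (fun b => if a = b then 1 else 0), fun jj => ?_⟩
  have h5 : z jj = φ (Pi.single jj 1) := by
    simp [φ, Pi.single_apply]
  rw [h5, hfac]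
  rw [LinearMap.pi_apply_eq_sum_univ ψ (H.mulVec (Pi.single jj 1))]
  refine Finset.sum_congr rfl (fun a _ => ?_)
  have h6 : H.mulVec (Pi.single jj 1) a = H a jj := by
    simp [Matrix.mulVec, dotProduct, Pi.single_apply]
  rw [h6, smul_eq_mul, mul_comm]

theorem stmt10 {r n k : ℕ} (hr : 3 < r) (hn : n = 2 ^ r - 1) (hk : k = 2 ^ r - 1 - r)
    (H : Matrix (Fin r) (Fin n) (ZMod 2))
    (hcols : ∀ v : Fin r → ZMod 2, v ≠ 0 → ∃! j : Fin n, (fun a => H a j) = v)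
    (G : Matrix (Fin k) (Fin n) (ZMod 2))
    (hspan : Submodule.span (ZMod 2) (Set.range G) = LinearMap.ker H.mulVecLin)
    (hsys : ∀ a : Fin k, ∃ j : Fin n, (fun b => G b j) = Pi.single a 1) :
    (∀ lam : Fin k → ℝ, Achievable G lam → ∑ i : Fin k, lam i ≤ (k : ℝ)) ∧
      Achievable G (fun _ => 1) := by
  classical
  -- systematic columns
  choose j hj using hsys
  have hjinj : Function.Injective j := by
    intro a b hab
    have h1 : (Pi.single a 1 : Fin k → ZMod 2) = Pi.single b 1 := by
      rw [← hj a, ← hj b, hab]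
    by_contra hne
    have h2 := congrFun h1 a
    rw [Pi.single_eq_same, Pi.single_eq_of_ne hne] at h2
    exact one_ne_zero h2
  -- surjectivity of H
  have hsurj : Function.Surjective H.mulVecLin := by
    have hsingle : ∀ a : Fin r,
        (Pi.single a 1 : Fin r → ZMod 2) ∈ LinearMap.range H.mulVecLin := by
      intro a
      have hne : (Pi.single a 1 : Fin r → ZMod 2) ≠ 0 := by
        intro h0
        have := congrFun h0 a
        rw [Pi.single_eq_same] at this
        exact one_ne_zero this
      obtain ⟨jj, hjj, _⟩ := hcols _ hne
      refine ⟨Pi.single jj 1, ?_⟩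
      funext a'
      rw [← congrFun hjj a']
      simp [Matrix.mulVecLin, Matrix.mulVec, dotProduct, Pi.single_apply]
    intro v
    have hv : v = ∑ a, v a • (Pi.single a 1 : Fin r → ZMod 2) := by
      funext b
      rw [Finset.sum_apply]
      simp [Pi.single_apply]
    have : v ∈ LinearMap.range H.mulVecLin := by
      rw [hv]
      exact Submodule.sum_mem _ (fun a _ => Submodule.smul_mem _ _ (hsingle a))
    exact this
  have hn0 : 0 < n := by
    have h2 := Nat.lt_two_pow_self (n := r)
    omega
  have hnk : n - k = r := by
    have h2 := Nat.lt_two_pow_self (n := r)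
    omega
  have key : ∀ (i : Fin k) (R : Finset (Fin n)), IsRecoverySet G i R → ∃ a : Fin k, j a ∈ R := by
    intro i R hRrec
    by_contra hno
    push_neg at hno
    rw [IsRecoverySet, Finsupp.mem_span_image_iff_linearCombination] at hRrec
    obtain ⟨l, hlsupp, hlc⟩ := hRrec
    set x : Fin n → ZMod 2 := fun jj => l jj with hxdef
    have hsupp : ∀ jj : Fin n, x jj ≠ 0 → jj ∈ R := by
      intro jj h
      exact hlsupp (Finsupp.mem_support_iff.2 h)
    have hxG : G.mulVec x = Pi.single i 1 := by
      rw [← hlc]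
      funext a
      rw [Finsupp.linearCombination_apply, Finsupp.sum, Finset.sum_apply]
      simp only [Pi.smul_apply, smul_eq_mul]
      rw [show G.mulVec x a = ∑ jj : Fin n, l jj * G a jj from by
        simp [Matrix.mulVec, dotProduct, hxdef, mul_comm]]
      exact (Finset.sum_subset (Finset.subset_univ _) (fun jj _ hjj => by
        rw [Finsupp.notMem_support_iff.1 hjj, zero_mul])).symm
    have hGei : G.mulVec (Pi.single (j i) 1) = Pi.single i 1 := by
      funext a
      have h3 : G.mulVec (Pi.single (j i) 1) a = G a (j i) := by
        simp [Matrix.mulVec, dotProduct, Pi.single_apply]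
      rw [h3]
      exact congrFun (hj i) a
    set z : Fin n → ZMod 2 := x - Pi.single (j i) 1 with hzdef
    have hGz : G.mulVec z = 0 := by
      rw [hzdef, Matrix.mulVec_sub, hxG, hGei, sub_self]
    have hx0 : x (j i) = 0 := by
      by_contra h
      exact hno i (hsupp _ h)
    have hzne : z (j i) ≠ 0 := by
      rw [hzdef]
      simp only [Pi.sub_apply, hx0, Pi.single_eq_same, zero_sub]
      decide
    have hperp : ∀ c : Fin n → ZMod 2, H.mulVec c = 0 → ∑ jj, z jj * c jj = 0 := by
      intro c hc
      have hc' : c ∈ Submodule.span (ZMod 2) (Set.range G) := by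
        rw [hspan]
        exact LinearMap.mem_ker.2 (by simpa [Matrix.mulVecLin_apply] using hc)
      refine Submodule.span_induction
        (p := fun c _ => ∑ jj, z jj * c jj = 0) ?_ ?_ ?_ ?_ hc'
      · rintro _ ⟨a, rfl⟩
        have h4 := congrFun hGz a
        calc ∑ jj, z jj * G a jj = ∑ jj, G a jj * z jj :=
              Finset.sum_congr rfl (fun jj _ => mul_comm _ _)
          _ = 0 := h4
      · simp
      · intro u v _ _ hu hv
        have : ∑ jj, z jj * (u + v) jj = (∑ jj, z jj * u jj) + ∑ jj, z jj * v jj := by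
          simp [mul_add, Finset.sum_add_distrib]
        rw [this, hu, hv, add_zero]
      · intro m u _ hu
        have : ∑ jj, z jj * (m • u) jj = m * ∑ jj, z jj * u jj := by
          simp [Finset.mul_sum, mul_left_comm]
        rw [this, hu, mul_zero]
    obtain ⟨y, hy⟩ := dot_factor H hsurj z hperp
    have hyne : y ≠ 0 := by
      intro h0
      apply hzne
      rw [hy (j i), h0]
      simp
    -- lower bound on the support of z
    have hlow : 2 ^ (r - 1) ≤ (Finset.univ.filter (fun jj : Fin n => z jj ≠ 0)).card := by
      rw [← count_dot_one y hyne]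
      refine Finset.card_le_card_of_injOn
        (fun v => if h : v = 0 then ⟨0, hn0⟩ else (hcols v h).choose) ?_ ?_
      · intro v hv
        simp only [Finset.mem_coe, Finset.mem_filter, Finset.mem_univ, true_and] at hv ⊢
        have hv0 : v ≠ 0 := by
          intro h0
          rw [h0] at hv
          simp at hv
        rw [dif_neg hv0]
        have hcol := (hcols v hv0).choose_spec.1
        rw [hy _]
        have : ∀ a, H a (hcols v hv0).choose = v a := fun a => congrFun hcol a
        rw [Finset.sum_congr rfl (fun a _ => by rw [this a])]
        rw [hv]
        decide
      · intro v hv v' hv' hvv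
        simp only [Finset.coe_filter, Set.mem_setOf_eq, Finset.mem_univ, true_and] at hv hv'
        have hv0 : v ≠ 0 := by
          intro h0; rw [h0] at hv; simp at hv
        have hv0' : v' ≠ 0 := by
          intro h0; rw [h0] at hv'; simp at hv'
        simp only [dif_neg hv0, dif_neg hv0'] at hvv
        rw [← (hcols v hv0).choose_spec.1, ← (hcols v' hv0').choose_spec.1, hvv]
    -- upper bound on the support of z
    have hhigh : (Finset.univ.filter (fun jj : Fin n => z jj ≠ 0)).card ≤ r + 1 := by
      have hsub : Finset.univ.filter (fun jj : Fin n => z jj ≠ 0) ⊆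
          (Finset.univ.filter (fun jj : Fin n => ∀ a, j a ≠ jj)) ∪ {j i} := by
        intro jj hjj
        simp only [Finset.mem_filter, Finset.mem_univ, true_and, Finset.mem_union,
          Finset.mem_singleton] at hjj ⊢
        by_cases hji : jj = j i
        · right; exact hji
        · left
          intro a hja
          have hzx : z jj = x jj := by
            rw [hzdef]
            simp [Pi.single_apply, hji]
          exact hno a (by rw [hja]; exact hsupp jj (by rw [← hzx]; exact hjj))
      have himg : (Finset.univ.filter (fun jj : Fin n => ∀ a, j a ≠ jj)) =
          Finset.univ \ Finset.image j Finset.univ := by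
        ext jj
        simp [eq_comm]
      have hcard1 : (Finset.univ.filter (fun jj : Fin n => ∀ a, j a ≠ jj)).card = n - k := by
        rw [himg, Finset.card_sdiff_of_subset (Finset.subset_univ _),
          Finset.card_image_of_injective _ hjinj]
        simp
      calc (Finset.univ.filter (fun jj : Fin n => z jj ≠ 0)).card
          ≤ ((Finset.univ.filter (fun jj : Fin n => ∀ a, j a ≠ jj)) ∪ {j i}).card :=
            Finset.card_le_card hsub
        _ ≤ (Finset.univ.filter (fun jj : Fin n => ∀ a, j a ≠ jj)).card + ({j i} : Finset (Fin n)).card :=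
            Finset.card_union_le _ _
        _ = (n - k) + 1 := by rw [hcard1, Finset.card_singleton]
        _ = r + 1 := by rw [hnk]
    have hcontr : 2 ^ (r - 1) ≤ r + 1 := hlow.trans hhigh
    have haux := aux_pow (r - 1) (by omega)
    clear * - hr hcontr haux
    omega
  constructor
  · -- upper bound
    rintro lam ⟨w, hw0, hwR, hwsum, hwcap⟩
    have step1 : ∀ (i : Fin k) (R : Finset (Fin n)),
        w i R ≤ ∑ a : Fin k, (if j a ∈ R then w i R else 0) := by
      intro i R
      rcases eq_or_ne (w i R) 0 with h0 | h0
      · rw [h0]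
        exact Finset.sum_nonneg (fun a _ => by positivity)
      · obtain ⟨a, ha⟩ := key i R (hwR i R h0)
        have := Finset.single_le_sum
          (f := fun a : Fin k => if j a ∈ R then w i R else 0)
          (fun b _ => by by_cases hb : j b ∈ R <;> simp [hb, hw0 i R]) (Finset.mem_univ a)
        simpa [ha] using this
    calc ∑ i, lam i = ∑ i, ∑ R : Finset (Fin n), w i R := by
          refine Finset.sum_congr rfl (fun i _ => (hwsum i).symm)
      _ ≤ ∑ i, ∑ R : Finset (Fin n), ∑ a : Fin k, (if j a ∈ R then w i R else 0) := by
          refine Finset.sum_le_sum (fun i _ => Finset.sum_le_sum (fun R _ => step1 i R))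
      _ = ∑ i, ∑ a : Fin k, ∑ R : Finset (Fin n), (if j a ∈ R then w i R else 0) := by
          exact Finset.sum_congr rfl (fun i _ => Finset.sum_comm)
      _ = ∑ a : Fin k, ∑ i, ∑ R : Finset (Fin n), (if j a ∈ R then w i R else 0) := by
          exact Finset.sum_comm
      _ ≤ ∑ a : Fin k, (1 : ℝ) := Finset.sum_le_sum (fun a _ => hwcap (j a))
      _ = (k : ℝ) := by simp
  · -- achievability of all-ones
    refine ⟨fun i R => if R = {j i} then (1 : ℝ) else 0, ?_, ?_, ?_, ?_⟩
    · intro i R; by_cases h : R = {j i} <;> simp [h]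
    · intro i R hne
      have hR : R = {j i} := by
        by_contra h; exact hne (by simp [h])
      subst hR
      refine Submodule.subset_span ?_
      exact ⟨j i, by simp, hj i⟩
    · intro i
      simp [Finset.sum_ite_eq']
    · intro v
      have hinner : ∀ i : Fin k,
          (∑ R : Finset (Fin n), if v ∈ R then (if R = {j i} then (1:ℝ) else 0) else 0)
          = if v = j i then (1:ℝ) else 0 := by
        intro i
        rw [show (fun R : Finset (Fin n) => if v ∈ R then (if R = {j i} then (1:ℝ) else 0) else 0)
            = fun R : Finset (Fin n) => if R = {j i} then (if v ∈ R then (1:ℝ) else 0) else 0 from ?_]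
        · rw [Finset.sum_ite_eq']
          simp [Finset.mem_singleton]
        · funext R
          by_cases h1 : R = {j i} <;> by_cases h2 : v ∈ R <;> simp [h1, h2]
      calc (∑ i : Fin k, ∑ R : Finset (Fin n), if v ∈ R then
              (if R = {j i} then (1:ℝ) else 0) else 0)
          = ∑ i : Fin k, (if v = j i then (1:ℝ) else 0) := Finset.sum_congr rfl (fun i _ => hinner i)
        _ = ((Finset.univ.filter (fun i : Fin k => v = j i)).card : ℝ) := by
            rw [Finset.card_filter]
            push_cast
            rfl
        _ ≤ 1 := by
            have : (Finset.univ.filter (fun i : Fin k => v = j i)).card ≤ 1 := by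
              refine Finset.card_le_one.2 (fun a ha b hb => ?_)
              simp only [Finset.mem_filter] at ha hb
              exact hjinj (ha.2.symm.trans hb.2)
            exact_mod_cast this
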